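/- Every oriented hypergraph has an algebraic spanning tree over the reals: there exists T ⊆ E such that ℬ := γ^{-1}(Im δ^0) has a basis (x_t : t∈T) with ⟨x_t, t'⟩ = δ_{tt'} for all t'∈T, and 𝒞 := Ker ∂_1 has a basis (x_e : e∈E∖T) with ⟨x_e, e'⟩ = δ_{ee'} for all e'∈E∖T. -/

import Mathlib

open Finset

/-- Incidence sign of vertex `v` in edge `e = (A e, B e)`. -/
def hsgnR {V E : Type*} [DecidableEq V] (A B : E → Finset V) (e : E) (v : V) : ℝ :=
  (if v ∈ B e then 1 else 0) - (if v ∈ A e then 1 else 0)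

/-- The boundary homomorphism `∂₁ : C₁ → C₀` of an oriented hypergraph over `ℝ`. -/
noncomputable def bdryR {V E : Type*} [DecidableEq V] [Fintype E] (A B : E → Finset V) :
    (E → ℝ) →ₗ[ℝ] (V → ℝ) :=
  LinearMap.pi fun v => ∑ e : E, hsgnR A B e v • (LinearMap.proj e : (E → ℝ) →ₗ[ℝ] ℝ)

/-- The coboundary homomorphism `δ⁰ : C⁰ → C¹`, the dual of `∂₁`. -/
noncomputable def cobdryR {V E : Type*} [DecidableEq V] [Fintype E] (A B : E → Finset V) :
    Module.Dual ℝ (V → ℝ) →ₗ[ℝ] Module.Dual ℝ (E → ℝ) :=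
  (bdryR A B).dualMap

/-- The canonical map `γ` from chains to cochains (dual-basis map). -/
noncomputable def gamR (ι : Type*) [Fintype ι] [DecidableEq ι] :
    (ι → ℝ) →ₗ[ℝ] Module.Dual ℝ (ι → ℝ) :=
  (Pi.basisFun ℝ ι).toDual

open Module Submodule Matrix

section GeneralHelpers
variable {ι : Type*} [Fintype ι] [DecidableEq ι]

/-- A vector whose dot product with every element of a spanning set vanishes is zero. -/
lemma dot_eq_zero_of_span (a : ι → ℝ) (s : Set (ι → ℝ))
    (hspan : Submodule.span ℝ s = ⊤) (h : ∀ v ∈ s, ∑ i, a i * v i = 0) : a = 0 := by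
  set f : (ι → ℝ) →ₗ[ℝ] ℝ := ∑ i, a i • LinearMap.proj i with hf
  have hfapp : ∀ v, f v = ∑ i, a i * v i := by
    intro v; simp [hf, LinearMap.sum_apply]
  have hker : s ⊆ (LinearMap.ker f : Set (ι → ℝ)) := fun v hv => by
    simp [LinearMap.mem_ker, hfapp, h v hv]
  have htop : LinearMap.ker f = ⊤ := top_unique (hspan ▸ Submodule.span_le.mpr hker)
  have hf0 : f = 0 := LinearMap.ker_eq_top.mp htop
  funext i
  have := hfapp (Pi.single i 1)
  rw [hf0] at this
  simpa [Pi.single_apply] using this.symm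

/-- Restriction of a submodule of `ι → ℝ` to the coordinates satisfying `P`. -/
noncomputable def resL (X : Submodule ℝ (ι → ℝ)) (P : ι → Prop) :
    X →ₗ[ℝ] ({i : ι // P i} → ℝ) :=
  LinearMap.pi fun t => (LinearMap.proj t.1).comp X.subtype

lemma basis_of_resL_bijective (X : Submodule ℝ (ι → ℝ)) (P : ι → Prop)
    (h : Function.Bijective (resL X P)) :
    ∃ b : Basis {i : ι // P i} ℝ X,
      ∀ t t' : {i : ι // P i}, (b t : ι → ℝ) t'.1 = if t = t' then 1 else 0 := by
  let eqv := LinearEquiv.ofBijective _ h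
  refine ⟨(Pi.basisFun ℝ _).map eqv.symm, fun t t' => ?_⟩
  have h1 : (eqv (((Pi.basisFun ℝ _).map eqv.symm) t)) t' = Pi.basisFun ℝ _ t t' := by
    simp
  have h2 : (eqv (((Pi.basisFun ℝ _).map eqv.symm) t)) t'
      = ((((Pi.basisFun ℝ _).map eqv.symm) t : X) : ι → ℝ) t'.1 := rfl
  rw [h2] at h1
  rw [h1, Pi.basisFun_apply, Pi.single_apply]
  by_cases hh : t = t' <;> simp [hh, eq_comm]

/-- Core lemma: a pair of dot-orthogonal submodules of complementary dimension admits
a simultaneous coordinate splitting. -/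
lemma core_split (W U : Submodule ℝ (ι → ℝ))
    (horth : ∀ x ∈ W, ∀ y ∈ U, ∑ i, x i * y i = 0)
    (hdim : finrank ℝ W + finrank ℝ U = Fintype.card ι) :
    ∃ T : Finset ι, Function.Bijective (resL W (· ∈ T)) ∧
      Function.Bijective (resL U (· ∉ T)) := by
  classical
  set r := finrank ℝ W with hr
  let w : Basis (Fin r) ℝ W := Module.finBasis ℝ W
  let c : ι → (Fin r → ℝ) := fun e i => (w i : ι → ℝ) e
  -- the rows span everything
  have hinj : Function.Injective (Matrix.mulVecLin (Matrix.of c)) := by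
    rw [← LinearMap.ker_eq_bot, eq_bot_iff]
    intro a ha
    simp only [LinearMap.mem_ker] at ha
    have h1 : ∀ e, (((∑ i, a i • w i : W) : ι → ℝ)) e = 0 := by
      intro e
      have := congrFun ha e
      simpa [Matrix.mulVecLin, Matrix.mulVec, dotProduct, c, mul_comm] using this
    have h2 : (∑ i, a i • w i : W) = 0 := by
      ext e; exact h1 e
    have h3 := Fintype.linearIndependent_iff.mp w.linearIndependent a h2
    simp [Submodule.mem_bot]
    funext i; exact h3 i
  have hspanc : Submodule.span ℝ (Set.range c) = ⊤ := by
    apply Submodule.eq_top_of_finrank_eq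
    have h1 : (Matrix.of c).rank = r := by
      rw [Matrix.rank, LinearMap.finrank_range_of_inj hinj]
      simp
    have h2 : (Matrix.of c)ᵀ.rank = r := by rw [Matrix.rank_transpose]; exact h1
    have h3 : LinearMap.range (Matrix.mulVecLin (Matrix.of c)ᵀ)
        = Submodule.span ℝ (Set.range c) := by
      rw [Matrix.range_mulVecLin]
      rfl
    have := h2
    rw [Matrix.rank, h3] at this
    rw [this]
    simp
  -- select independent rows
  obtain ⟨s, hsub, hspan, hli⟩ := exists_linearIndependent ℝ (Set.range c)
  rw [hspanc] at hspan
  have hsfin : s.Finite := hli.setFinite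
  have : Fintype s := hsfin.fintype
  have hcard : Fintype.card s = r := by
    let bs : Basis s ℝ (Fin r → ℝ) := Basis.mk hli (by rw [Subtype.range_coe, hspan])
    have := Module.finrank_eq_card_basis bs
    simp at this
    rw [← Nat.card_coe_set_eq, Nat.card_eq_fintype_card] at this
    omega
  -- choose preimages
  have hch : ∀ x : s, ∃ e : ι, c e = (x : Fin r → ℝ) := fun x => hsub x.2
  choose g hg using hch
  have ginj : Function.Injective g := by
    intro x y hxy
    have : (x : Fin r → ℝ) = y := by rw [← hg x, ← hg y, hxy]
    exact Subtype.ext this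
  let T : Finset ι := Finset.univ.image g
  have hTcard : T.card = r := by
    rw [Finset.card_image_of_injective _ ginj, Finset.card_univ, hcard]
  have hTset : c '' ↑T = s := by
    ext v
    constructor
    · rintro ⟨e, he, rfl⟩
      simp only [T, Finset.coe_image, Finset.coe_univ, Set.image_univ] at he
      obtain ⟨x, rfl⟩ := he
      rw [hg x]; exact x.2
    · intro hv
      exact ⟨g ⟨v, hv⟩, by simp [T], hg ⟨v, hv⟩⟩
  have hspanT : Submodule.span ℝ (c '' ↑T) = ⊤ := by rw [hTset, hspan]
  -- injectivity of resL W (· ∈ T)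
  have hWinj : Function.Injective (resL W (· ∈ T)) := by
    rw [← LinearMap.ker_eq_bot, eq_bot_iff]
    intro x hx
    simp only [LinearMap.mem_ker] at hx
    have hx' : ∀ t ∈ T, (x : ι → ℝ) t = 0 := by
      intro t ht
      exact congrFun hx ⟨t, ht⟩
    set a : Fin r → ℝ := fun i => w.repr x i with ha
    have ha0 : a = 0 := by
      apply dot_eq_zero_of_span a (c '' ↑T) hspanT
      rintro v ⟨t, ht, rfl⟩
      have hrepr : (x : W) = ∑ i, a i • w i := by
        rw [ha]; exact (w.sum_repr x).symm
      have : (x : ι → ℝ) t = ∑ i, a i * c t i := by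
        rw [hrepr]
        simp [c]
      rw [← this]; exact hx' t ht
    have : (x : W) = 0 := by
      have hrepr : (x : W) = ∑ i, a i • w i := by rw [ha]; exact (w.sum_repr x).symm
      rw [hrepr, ha0]; simp
    simpa [Submodule.mem_bot] using this
  have hcardT : Fintype.card {i : ι // i ∈ T} = r := by
    simp [Fintype.card_coe, hTcard]
  have hWbij : Function.Bijective (resL W (· ∈ T)) := by
    refine ⟨hWinj, ?_⟩
    have : finrank ℝ W = finrank ℝ ({i : ι // i ∈ T} → ℝ) := by
      rw [Module.finrank_fintype_fun_eq_card, hcardT, hr]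
    exact (LinearMap.injective_iff_surjective_of_finrank_eq_finrank this).mp hWinj
  refine ⟨T, hWbij, ?_⟩
  have hUinj : Function.Injective (resL U (· ∉ T)) := by
    rw [← LinearMap.ker_eq_bot, eq_bot_iff]
    intro x hx
    simp only [LinearMap.mem_ker] at hx
    have hx' : ∀ e, e ∉ T → (x : ι → ℝ) e = 0 := fun e he => congrFun hx ⟨e, he⟩
    -- find b ∈ W matching x on T
    obtain ⟨b, hb⟩ := hWbij.2 (fun t : {i : ι // i ∈ T} => (x : ι → ℝ) t.1)
    have hbT : ∀ t ∈ T, (b : ι → ℝ) t = (x : ι → ℝ) t := fun t ht =>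
      congrFun hb ⟨t, ht⟩
    have hkey : ∀ e, (b : ι → ℝ) e * (x : ι → ℝ) e = (x : ι → ℝ) e * (x : ι → ℝ) e := by
      intro e
      by_cases he : e ∈ T
      · rw [hbT e he]
      · rw [hx' e he]; ring
    have h0 : ∑ e, (x : ι → ℝ) e * (x : ι → ℝ) e = 0 := by
      rw [← Finset.sum_congr rfl (fun e _ => hkey e)]
      exact horth b b.2 x x.2
    have : ∀ e ∈ Finset.univ, (x : ι → ℝ) e * (x : ι → ℝ) e = 0 := by
      intro e _
      exact (Finset.sum_eq_zero_iff_of_nonneg (fun e _ => mul_self_nonneg _)).mp h0 e (by simp)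
    have hx0 : (x : ι → ℝ) = 0 := by
      funext e; exact mul_self_eq_zero.mp (this e (by simp))
    have : x = 0 := Subtype.ext hx0
    simpa [Submodule.mem_bot] using this
  refine ⟨hUinj, ?_⟩
  have hcardT' : Fintype.card {i : ι // i ∉ T} = Fintype.card ι - r := by
    rw [Fintype.card_subtype_compl, hcardT]
  have : finrank ℝ U = finrank ℝ ({i : ι // i ∉ T} → ℝ) := by
    rw [Module.finrank_fintype_fun_eq_card, hcardT']
    omega
  exact (LinearMap.injective_iff_surjective_of_finrank_eq_finrank this).mp hUinj

end GeneralHelpers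

section Hypergraph
variable {V E : Type*} [Fintype V] [Fintype E] [DecidableEq V] [DecidableEq E]

lemma gamR_apply (x f : E → ℝ) : gamR E x f = ∑ e, f e * x e := by
  have h1 : ∀ e, gamR E x (Pi.basisFun ℝ E e) = x e := by
    intro e
    rw [gamR, Basis.toDual_eq_repr]
    simp
  have hf : f = ∑ e, f e • Pi.basisFun ℝ E e := by
    funext j
    simp [Pi.basisFun_apply, Pi.single_apply]
  conv_lhs => rw [hf]
  rw [map_sum]
  refine Finset.sum_congr rfl fun e _ => ?_
  rw [LinearMap.map_smul]
  rw [h1 e, smul_eq_mul]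

variable (A B : E → Finset V)

/-- The incidence matrix of the oriented hypergraph. -/
noncomputable def incM : Matrix V E ℝ := Matrix.of fun v e => hsgnR A B e v

lemma bdryR_eq : bdryR A B = (incM A B).mulVecLin := by
  apply LinearMap.ext; intro x
  funext v
  simp [bdryR, incM, Matrix.mulVecLin, Matrix.mulVec, dotProduct,
    LinearMap.pi_apply, LinearMap.sum_apply]

lemma bdryR_single (e : E) : bdryR A B (Pi.single e 1) = fun v => incM A B v e := by
  rw [bdryR_eq]
  funext v
  simp [Matrix.mulVecLin, Matrix.mulVec, dotProduct, Pi.single_apply]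

lemma comapB_eq :
    Submodule.comap (gamR E) (LinearMap.range (cobdryR A B))
      = LinearMap.range ((incM A B)ᵀ.mulVecLin) := by
  ext x
  simp only [Submodule.mem_comap, LinearMap.mem_range, cobdryR]
  constructor
  · rintro ⟨φ, hφ⟩
    refine ⟨fun v => φ (Pi.single v 1), ?_⟩
    funext e
    have hx : gamR E x (Pi.single e 1) = x e := by
      rw [gamR_apply]
      simp [Pi.single_apply]
    have h1 : φ (bdryR A B (Pi.single e 1)) = x e := by
      rw [← hx, ← hφ]; rfl
    rw [bdryR_single] at h1
    have h2 : (fun v => incM A B v e) = ∑ v, incM A B v e • (Pi.single v (1:ℝ) : V → ℝ) := by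
      funext u
      simp [Pi.single_apply]
    rw [h2, map_sum] at h1
    simp only [LinearMap.map_smul, smul_eq_mul] at h1
    rw [← h1]
    simp [Matrix.mulVecLin, Matrix.mulVec, Matrix.vecMul, dotProduct, Matrix.transpose_apply,
      mul_comm]
  · rintro ⟨y, rfl⟩
    refine ⟨gamR V y, ?_⟩
    apply (Pi.basisFun ℝ E).ext
    intro e
    have h0 : (Pi.basisFun ℝ E) e = Pi.single e 1 := Pi.basisFun_apply ℝ E e
    rw [h0]
    show gamR V y (bdryR A B (Pi.single e 1)) = _
    rw [bdryR_single, gamR_apply, gamR_apply]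
    simp only [Pi.single_apply, mul_ite, mul_one, mul_zero, Finset.sum_ite_eq',
      Finset.mem_univ, if_true]
    simp [Matrix.mulVecLin, Matrix.mulVec, Matrix.vecMul, dotProduct, Matrix.transpose_apply,
      mul_comm]

lemma orthBC : ∀ x ∈ LinearMap.range ((incM A B)ᵀ.mulVecLin),
    ∀ y ∈ LinearMap.ker (bdryR A B), ∑ e, x e * y e = 0 := by
  rintro x ⟨a, rfl⟩ y hy
  rw [bdryR_eq, LinearMap.mem_ker] at hy
  have h1 : ∑ e, ((incM A B)ᵀ.mulVecLin a) e * y e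
      = ((incM A B)ᵀ.mulVec a) ⬝ᵥ y := rfl
  rw [h1, Matrix.mulVec_transpose, ← Matrix.dotProduct_mulVec]
  have : (incM A B).mulVec y = 0 := hy
  rw [this, dotProduct_zero]

lemma dimBC : Module.finrank ℝ (LinearMap.range ((incM A B)ᵀ.mulVecLin))
    + Module.finrank ℝ (LinearMap.ker (bdryR A B)) = Fintype.card E := by
  rw [bdryR_eq]
  have h1 : Module.finrank ℝ (LinearMap.range ((incM A B)ᵀ.mulVecLin))
      = (incM A B)ᵀ.rank := rfl
  rw [h1, Matrix.rank_transpose]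
  have h2 : (incM A B).rank
      = Module.finrank ℝ (LinearMap.range ((incM A B).mulVecLin)) := rfl
  rw [h2, LinearMap.finrank_range_add_finrank_ker]
  simp

end Hypergraph

/-- every hypergraph has an algebraic spanning tree over the reals:
a set `T ⊆ E` with a basis `(x_t : t ∈ T)` of `ℬ = γ⁻¹(Im δ⁰)` satisfying
`⟨x_t, t'⟩ = δ_{tt'}` and a basis `(x_e : e ∈ E∖T)` of `𝒞 = Ker ∂₁` satisfying
`⟨x_e, e'⟩ = δ_{ee'}`. -/
theorem stmt4 {V E : Type*} [Fintype V] [Fintype E] [DecidableEq V] [DecidableEq E]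
    (A B : E → Finset V) (hdisj : ∀ e, Disjoint (A e) (B e)) :
    ∃ T : Finset E,
      (∃ bB : Basis {t : E // t ∈ T} ℝ
          ↥(Submodule.comap (gamR E) (LinearMap.range (cobdryR A B))),
        ∀ t t' : {t : E // t ∈ T},
          (bB t : E → ℝ) t'.1 = (if t = t' then 1 else 0)) ∧
      (∃ bC : Basis {e : E // e ∉ T} ℝ ↥(LinearMap.ker (bdryR A B)),
        ∀ e e' : {e : E // e ∉ T},
          (bC e : E → ℝ) e'.1 = (if e = e' then 1 else 0)) := by
  classical
  obtain ⟨T, hW, hU⟩ := core_split (LinearMap.range ((incM A B)ᵀ.mulVecLin))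
    (LinearMap.ker (bdryR A B)) (orthBC A B) (dimBC A B)
  refine ⟨T, ?_, ?_⟩
  · rw [comapB_eq]
    exact basis_of_resL_bijective _ _ hW
  · exact basis_of_resL_bijective _ _ hU
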